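/- arXiv:1709.08917 — 4 statements merged into one kernel-verified Lean document; each statement's English description precedes it below -/
import Mathlib

section
/- Let m, n ≥ 1 and let k be an integer with 1 ≤ k ≤ min(m, n). There exists a constant c > 0 depending only on m and n such that for every real m × n matrix M and every real C ≥ 1, at least one of the following holds: either there is an (n−k+1)-dimensional linear subspace X of ℝ^n such that ‖Mx‖ ≤ C^{−1}‖x‖ for all x ∈ X, or there is a k-dimensional linear subspace V of ℝ^n spanned by standard basis vectors of ℝ^n such that ‖Mv‖ ≥ c·C^{−1}‖v‖ for all v ∈ V. -/
lemma aux_bound {n r : ℕ} (w : ℕ → Fin n → ℝ) (p : ℕ → Fin n)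
    (hdiag : ∀ i < r, w i (p i) = 1) (hnorm : ∀ i < r, ‖w i‖ ≤ 1)
    (htri : ∀ i j, i < j → j < r → w j (p i) = 0)
    (a : ℕ → ℝ) (x : Fin n → ℝ) (hx : x = ∑ j ∈ Finset.range r, a j • w j) :
    ∀ i < r, |a i| ≤ 2 ^ i * ‖x‖ := by
  intro i
  induction i using Nat.strong_induction_on with
  | _ i ih =>
    intro hir
    have hxpi : x (p i) = a i + ∑ j ∈ Finset.range i, a j * w j (p i) := by
      have h1 : x (p i) = ∑ j ∈ Finset.range r, a j * w j (p i) := by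
        rw [hx]; simp [Finset.sum_apply]
      have h2 : ∑ j ∈ Finset.range r, a j * w j (p i)
          = ∑ j ∈ Finset.range (i+1), a j * w j (p i) := by
        refine (Finset.sum_subset (Finset.range_subset_range.2 hir) ?_).symm
        intro j hj hj'
        have : i < j := by
          simp only [Finset.mem_range] at hj hj' ⊢; omega
        rw [htri i j this (Finset.mem_range.1 hj), mul_zero]
      rw [h1, h2, Finset.sum_range_succ, hdiag i hir, mul_one, add_comm]
    have hai : a i = x (p i) - ∑ j ∈ Finset.range i, a j * w j (p i) := by
      rw [hxpi]; ring
    have hbound : |a i| ≤ ‖x‖ + ∑ j ∈ Finset.range i, 2 ^ j * ‖x‖ := by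
      rw [hai]
      refine (abs_sub _ _).trans ?_
      gcongr
      · calc |x (p i)| = ‖x (p i)‖ := (Real.norm_eq_abs _).symm
          _ ≤ ‖x‖ := norm_le_pi_norm x (p i)
      · refine (Finset.abs_sum_le_sum_abs _ _).trans ?_
        refine Finset.sum_le_sum fun j hj => ?_
        rw [abs_mul]
        have hj' : j < i := Finset.mem_range.1 hj
        have h1 : |a j| ≤ 2 ^ j * ‖x‖ := ih j hj' (hj'.trans hir)
        have h2 : |w j (p i)| ≤ 1 := by
          calc |w j (p i)| = ‖w j (p i)‖ := (Real.norm_eq_abs _).symm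
            _ ≤ ‖w j‖ := norm_le_pi_norm _ _
            _ ≤ 1 := hnorm j (hj'.trans hir)
        calc |a j| * |w j (p i)| ≤ (2 ^ j * ‖x‖) * 1 := by
              refine mul_le_mul h1 h2 (abs_nonneg _) ?_
              positivity
          _ = 2 ^ j * ‖x‖ := by ring
    have hgeom : ∑ j ∈ Finset.range i, (2:ℝ) ^ j = 2 ^ i - 1 := by
      have := geom_sum_eq (by norm_num : (2:ℝ) ≠ 1) i
      norm_num at this; linarith
    calc |a i| ≤ ‖x‖ + ∑ j ∈ Finset.range i, 2 ^ j * ‖x‖ := hbound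
      _ = (1 + ∑ j ∈ Finset.range i, (2:ℝ) ^ j) * ‖x‖ := by
          rw [← Finset.sum_mul]; ring
      _ = 2 ^ i * ‖x‖ := by rw [hgeom]; ring

/-- For any real `m × n` matrix `M` and any `C ≥ 1`, either
`M` is small (in sup norm) on a linear subspace of dimension `n - k + 1`, or
`M` is bounded below by `≫ C⁻¹` on a `k`-dimensional coordinate subspace. -/
theorem statement5 (m n k : ℕ) (hm : 1 ≤ m) (hn : 1 ≤ n)
    (hk1 : 1 ≤ k) (hk2 : k ≤ min m n) :
    ∃ c : ℝ, 0 < c ∧ ∀ (M : Matrix (Fin m) (Fin n) ℝ) (C : ℝ), 1 ≤ C →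
      (∃ X : Submodule ℝ (Fin n → ℝ), Module.finrank ℝ X = n - k + 1 ∧
        ∀ x ∈ X, ‖M.mulVec x‖ ≤ C⁻¹ * ‖x‖) ∨
      (∃ S : Finset (Fin n), S.card = k ∧
        ∀ v : Fin n → ℝ, (∀ i ∉ S, v i = 0) → ‖M.mulVec v‖ ≥ c * C⁻¹ * ‖v‖) := by
  have hkn : k ≤ n := hk2.trans (min_le_right m n)
  set r : ℕ := n - k + 1 with hr
  refine ⟨((2:ℝ) ^ n)⁻¹, by positivity, fun M C hC => ?_⟩
  by_cases hbr2 : ∃ S : Finset (Fin n), S.card = k ∧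
      ∀ v : Fin n → ℝ, (∀ i ∉ S, v i = 0) → ‖M.mulVec v‖ ≥ ((2:ℝ)^n)⁻¹ * C⁻¹ * ‖v‖
  · exact Or.inr hbr2
  push_neg at hbr2
  left
  set c : ℝ := ((2:ℝ) ^ n)⁻¹ with hc
  have hcpos : 0 < c := by positivity
  have hCpos : (0:ℝ) < C⁻¹ := by positivity
  -- greedy construction
  have key : ∀ t ≤ r, ∃ (w : ℕ → Fin n → ℝ) (p : ℕ → Fin n),
      (∀ i < t, w i (p i) = 1) ∧ (∀ i < t, ‖w i‖ ≤ 1) ∧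
      (∀ i < t, ‖M.mulVec (w i)‖ ≤ c * C⁻¹) ∧
      (∀ i j, i < j → j < t → w j (p i) = 0) := by
    intro t
    induction t with
    | zero => exact fun _ => ⟨fun _ => 0, fun _ => ⟨0, hn⟩, by omega, by omega, by omega, by omega⟩
    | succ t ih =>
      intro ht
      obtain ⟨w, p, h1, h2, h3, h4⟩ := ih (by omega)
      -- previous pivots
      set P : Finset (Fin n) := (Finset.range t).image p with hP
      have hPcard : P.card ≤ t := (Finset.card_image_le).trans (by simp)
      have hcompl : k ≤ (Finset.univ \ P).card := by
        rw [Finset.card_sdiff_of_subset (Finset.subset_univ P)]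
        simp only [Finset.card_univ, Fintype.card_fin]
        omega
      obtain ⟨S, hSsub, hScard⟩ := Finset.exists_subset_card_eq hcompl
      obtain ⟨v, hvsupp, hvlt⟩ := hbr2 S hScard
      have hvne : v ≠ 0 := by
        intro h
        rw [h] at hvlt
        simp at hvlt
      -- pivot: coordinate with maximal absolute value
      obtain ⟨q, -, hq⟩ := Finset.exists_max_image Finset.univ (fun i => |v i|)
        ⟨⟨0, hn⟩, Finset.mem_univ _⟩
      have hnv : ‖v‖ = |v q| := by
        refine le_antisymm ?_ ?_
        · refine (pi_norm_le_iff_of_nonneg (abs_nonneg _)).2 fun i => ?_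
          rw [Real.norm_eq_abs]; exact hq i (Finset.mem_univ i)
        · rw [← Real.norm_eq_abs]; exact norm_le_pi_norm v q
      have hvq : v q ≠ 0 := by
        intro h
        apply hvne
        funext i
        have h0 : |v i| ≤ 0 := by simpa [h] using hq i (Finset.mem_univ i)
        exact abs_nonpos_iff.1 h0
      have hvnorm : 0 < ‖v‖ := by rw [hnv]; exact abs_pos.2 hvq
      have hqS : q ∈ S := by
        by_contra h
        exact hvq (hvsupp q h)
      set wn : Fin n → ℝ := (v q)⁻¹ • v with hwn
      refine ⟨Function.update w t wn, Function.update p t q, ?_, ?_, ?_, ?_⟩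
      · intro i hi
        rcases Nat.lt_succ_iff_lt_or_eq.1 hi with hi | hi'
        · rw [Function.update_of_ne (by omega), Function.update_of_ne (by omega)]
          exact h1 i hi
        · subst hi'
          rw [Function.update_self, Function.update_self, hwn]
          simp [inv_mul_cancel₀ hvq]
      · intro i hi
        rcases Nat.lt_succ_iff_lt_or_eq.1 hi with hi | hi'
        · rw [Function.update_of_ne (by omega)]; exact h2 i hi
        · subst hi'
          rw [Function.update_self, hwn, norm_smul, Real.norm_eq_abs, abs_inv, ← hnv,
            inv_mul_cancel₀ (by positivity)]
      · intro i hi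
        rcases Nat.lt_succ_iff_lt_or_eq.1 hi with hi | hi'
        · rw [Function.update_of_ne (by omega)]; exact h3 i hi
        · subst hi'
          rw [Function.update_self, hwn, Matrix.mulVec_smul, norm_smul,
            Real.norm_eq_abs, abs_inv, ← hnv]
          rw [inv_mul_le_iff₀ hvnorm]
          calc ‖M.mulVec v‖ ≤ c * C⁻¹ * ‖v‖ := le_of_lt hvlt
            _ = ‖v‖ * (c * C⁻¹) := by ring
      · intro i j hij hj
        rcases Nat.lt_succ_iff_lt_or_eq.1 hj with hj | hj'
        · rw [Function.update_of_ne (by omega : j ≠ t),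
            Function.update_of_ne (by omega : i ≠ t)]
          exact h4 i j hij hj
        · rw [hj', Function.update_self, Function.update_of_ne (by omega : i ≠ t), hwn]
          have hpi : p i ∉ S := by
            intro h
            have h2 := hSsub h
            rw [Finset.mem_sdiff] at h2
            exact h2.2 (Finset.mem_image.2 ⟨i, Finset.mem_range.2 (by omega), rfl⟩)
          simp [hvsupp _ hpi]
  obtain ⟨w, p, h1, h2, h3, h4⟩ := key r le_rfl
  set W : Fin r → (Fin n → ℝ) := fun i => w i.val with hW
  -- the coefficient-recovery bound, specialized
  have hbound : ∀ (a : Fin r → ℝ) (x : Fin n → ℝ), x = ∑ i, a i • W i →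
      ∀ i : Fin r, |a i| ≤ 2 ^ (i:ℕ) * ‖x‖ := by
    intro a x hx i
    set a' : ℕ → ℝ := fun j => if h : j < r then a ⟨j, h⟩ else 0 with ha'
    have hx' : x = ∑ j ∈ Finset.range r, a' j • w j := by
      rw [hx, ← Fin.sum_univ_eq_sum_range (fun j => a' j • w j) r]
      refine Finset.sum_congr rfl fun j _ => ?_
      simp [ha', j.isLt, hW]
    have := aux_bound w p h1 h2 h4 a' x hx' i.val i.isLt
    simpa [ha', i.isLt] using this
  have hli : LinearIndependent ℝ W := by
    rw [Fintype.linearIndependent_iff]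
    intro a ha i
    simpa using hbound a 0 ha.symm i
  refine ⟨Submodule.span ℝ (Set.range W), ?_, ?_⟩
  · rw [finrank_span_eq_card hli]; simp
  · intro x hx
    obtain ⟨a, hax⟩ := (Submodule.mem_span_range_iff_exists_fun ℝ).1 hx
    have hMx : M.mulVec x = ∑ i, a i • M.mulVec (W i) := by
      rw [← hax]
      rw [show (M.mulVec : (Fin n → ℝ) → (Fin m → ℝ)) = M.mulVecLin from rfl, map_sum]
      simp
    calc ‖M.mulVec x‖ ≤ ∑ i, ‖a i • M.mulVec (W i)‖ := by
          rw [hMx]; exact norm_sum_le _ _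
      _ ≤ ∑ i : Fin r, 2 ^ (i:ℕ) * ‖x‖ * (c * C⁻¹) := by
          refine Finset.sum_le_sum fun i _ => ?_
          rw [norm_smul, Real.norm_eq_abs]
          have hb := hbound a x hax.symm i
          have h3' := h3 i.val i.isLt
          refine mul_le_mul hb h3' (norm_nonneg _) ?_
          positivity
      _ = (∑ i : Fin r, (2:ℝ) ^ (i:ℕ)) * ‖x‖ * (c * C⁻¹) := by
          rw [← Finset.sum_mul, ← Finset.sum_mul]
      _ ≤ C⁻¹ * ‖x‖ := by
          have hsum : (∑ i : Fin r, (2:ℝ) ^ (i:ℕ)) = 2 ^ r - 1 := by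
            rw [Fin.sum_univ_eq_sum_range (fun i => (2:ℝ) ^ i) r]
            have := geom_sum_eq (by norm_num : (2:ℝ) ≠ 1) r
            norm_num at this; linarith
          rw [hsum]
          have hrn : r ≤ n := by omega
          have h2r : (2:ℝ) ^ r - 1 ≤ 2 ^ n := by
            have : (2:ℝ) ^ r ≤ 2 ^ n := by
              apply pow_le_pow_right₀ (by norm_num) hrn
            linarith
          have hcn : ((2:ℝ) ^ r - 1) * c ≤ 1 := by
            rw [hc, ← div_eq_mul_inv, div_le_one (by positivity)]
            exact h2r
          calc ((2:ℝ)^r - 1) * ‖x‖ * (c * C⁻¹) = (((2:ℝ)^r - 1) * c) * (C⁻¹ * ‖x‖) := by ring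
            _ ≤ 1 * (C⁻¹ * ‖x‖) := by
                refine mul_le_mul_of_nonneg_right hcn ?_
                positivity
            _ = C⁻¹ * ‖x‖ := one_mul _
end

section
/- Let d ≥ 2, R ≥ 1, n ≥ 1, let f = (f_1,…,f_R) be polynomials of degree d in n variables with real coefficients, and let c_0 > 0. Then there exist constants C_1 ≥ 1 and C_3 > 0 depending only on f and c_0 such that the following holds. Let β ∈ ℝ^R∖{0}, let B ≥ 1, let T_1,…,T_{d−1} ∈ (0, B], and let x^{(1)},…,x^{(d−1)}, y^{(1)},…,y^{(d−1)} ∈ ℝ^n satisfy T_i ≤ ‖x^{(i)}‖ ≤ 2T_i and T_i ≤ ‖y^{(i)}‖ ≤ 2T_i for all i, ‖m^{(β·f)}(x^{(1)},…,x^{(d−1)})‖ ≤ ‖β‖·B^{d−2} and ‖m^{(β·f)}(y^{(1)},…,y^{(d−1)})‖ ≤ ‖β‖·B^{d−2}. Set u^{(i)} = y^{(i)} − x^{(i)}, and assume that ‖u^{(i)}‖ ≤ C_1^{−1}·T_i for all i and that ‖J^{(β·f)}(x^{(1)},…,x^{(d−1)})·(u^{(1)},…,u^{(d−1)})‖ ≥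 c_0·‖β‖·T_1⋯T_{d−1}·max_{1≤i≤d−1} ‖u^{(i)}‖/T_i. Then ‖u^{(i)}‖ ≤ C_3·B^{d−2}·T_i/(T_1⋯T_{d−1}) for every i = 1,…,d−1. -/
open MvPolynomial

noncomputable section

/-- Iterated partial derivative along a list of variable indices. -/
def iterPderiv {n : ℕ} {K : Type*} [CommSemiring K] (js : List (Fin n))
    (f : MvPolynomial (Fin n) K) : MvPolynomial (Fin n) K :=
  js.foldr (fun j g => pderiv j g) f

/-- The system of multilinear forms `m^{(f)}`. -/
def mForm {K : Type*} [CommSemiring K] (d n : ℕ) (f : MvPolynomial (Fin n) K)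
    (x : Fin (d - 1) → Fin n → K) : Fin n → K :=
  fun i => ∑ j : Fin (d - 1) → Fin n,
    (∏ k, x k (j k)) * eval (0 : Fin n → K) (pderiv i (iterPderiv (List.ofFn j) f))

/-- The `n × (d-1)n` Jacobian matrix `J^f` of `m^{(f)}`. -/
def jacMat {K : Type*} [CommSemiring K] (d n : ℕ) (f : MvPolynomial (Fin n) K)
    (x : Fin (d - 1) → Fin n → K) : Matrix (Fin n) (Fin (d - 1) × Fin n) K :=
  fun i kl => mForm d n f (Function.update x kl.1 (Pi.single kl.2 1)) i

/-- σ*(H) for a system of complex forms. -/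
def sigmaStar (d n R : ℕ) (H : Fin R → MvPolynomial (Fin n) ℂ) : ℕ :=
  sSup {s : ℕ | ∃ β : Fin R → ℂ, β ≠ 0 ∧ ∃ x : Fin (d - 1) → Fin n → ℂ,
    (∀ k, x k ≠ 0) ∧ mForm d n (∑ ρ, β ρ • H ρ) x = 0 ∧
    s = n - (jacMat d n (∑ ρ, β ρ • H ρ) x).rank}

/-- σ* for a system with real coefficients. -/
def sigmaStarR (d n R : ℕ) (F : Fin R → MvPolynomial (Fin n) ℝ) : ℕ :=
  sigmaStar d n R fun ρ => (F ρ).map (algebraMap ℝ ℂ)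

/-- σ* for a system with integer coefficients. -/
def sigmaStarZ (d n R : ℕ) (F : Fin R → MvPolynomial (Fin n) ℤ) : ℕ :=
  sigmaStar d n R fun ρ => (F ρ).map (Int.castRingHom ℂ)

/-- `‖f^{[d]}‖`. -/
def normFd (d n : ℕ) (f : MvPolynomial (Fin n) ℝ) : ℝ :=
  (d.factorial : ℝ)⁻¹ * ⨆ j : Fin d → Fin n, |eval (0 : Fin n → ℝ) (iterPderiv (List.ofFn j) f)|

/-- `N^aux_f(B)`. -/
def Naux (d n : ℕ) (g : MvPolynomial (Fin n) ℝ) (B : ℝ) : ℕ :=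
  Set.ncard {x : Fin (d - 1) → Fin n → ℤ |
    (∀ k, ‖(fun i => (x k i : ℝ))‖ ≤ B) ∧
    ‖mForm d n g (fun k i => (x k i : ℝ))‖ < normFd d n g * B ^ (d - 2)}

end

noncomputable section Aux

lemma iterPderiv_cons {n : ℕ} (j : Fin n) (js : List (Fin n)) (f : MvPolynomial (Fin n) ℝ) :
    iterPderiv (j :: js) f = pderiv j (iterPderiv js f) := rfl

lemma iterPderiv_sum {n : ℕ} {ι : Type*} (js : List (Fin n)) (s : Finset ι)
    (g : ι → MvPolynomial (Fin n) ℝ) :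
    iterPderiv js (∑ ρ ∈ s, g ρ) = ∑ ρ ∈ s, iterPderiv js (g ρ) := by
  induction js with
  | nil => rfl
  | cons j js ih => rw [iterPderiv_cons, ih, map_sum]; rfl

lemma iterPderiv_smul {n : ℕ} (js : List (Fin n)) (c : ℝ) (p : MvPolynomial (Fin n) ℝ) :
    iterPderiv js (c • p) = c • iterPderiv js p := by
  induction js with
  | nil => rfl
  | cons j js ih => rw [iterPderiv_cons, ih, Derivation.map_smul]; rfl

/-- The partial sum over a subset `t` of blocks in which `x` is replaced by `u`. -/
def sel (d n : ℕ) (g : MvPolynomial (Fin n) ℝ) (x u : Fin (d - 1) → Fin n → ℝ)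
    (t : Finset (Fin (d - 1))) (i : Fin n) : ℝ :=
  ∑ j : Fin (d - 1) → Fin n,
    ((∏ k ∈ t, u k (j k)) * ∏ k ∈ tᶜ, x k (j k)) *
      eval (0 : Fin n → ℝ) (pderiv i (iterPderiv (List.ofFn j) g))

lemma mForm_expand (d n : ℕ) (g : MvPolynomial (Fin n) ℝ) (x u : Fin (d - 1) → Fin n → ℝ)
    (i : Fin n) :
    mForm d n g (fun k => x k + u k) i =
      ∑ t ∈ (Finset.univ : Finset (Fin (d - 1))).powerset, sel d n g x u t i := by
  unfold mForm sel
  rw [Finset.sum_comm]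
  refine Finset.sum_congr rfl fun j _ => ?_
  have h : (∏ k, (x k + u k) (j k)) =
      ∑ t ∈ (Finset.univ : Finset (Fin (d - 1))).powerset,
        (∏ k ∈ t, u k (j k)) * ∏ k ∈ tᶜ, x k (j k) := by
    simp only [Pi.add_apply]
    have h2 : ∀ k : Fin (d - 1), x k (j k) + u k (j k) = u k (j k) + x k (j k) :=
      fun k => add_comm _ _
    simp only [h2]
    rw [Finset.prod_add]
    exact Finset.sum_congr rfl fun t _ => by rw [Finset.compl_eq_univ_sdiff]
  rw [h, Finset.sum_mul]

lemma sel_empty (d n : ℕ) (g : MvPolynomial (Fin n) ℝ) (x u : Fin (d - 1) → Fin n → ℝ)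
    (i : Fin n) : sel d n g x u ∅ i = mForm d n g x i := by
  unfold sel mForm
  simp

lemma jac_eq (d n : ℕ) (g : MvPolynomial (Fin n) ℝ) (x u : Fin (d - 1) → Fin n → ℝ)
    (i : Fin n) :
    (jacMat d n g x).mulVec (fun kl => u kl.1 kl.2) i
      = ∑ k : Fin (d - 1), sel d n g x u {k} i := by
  unfold jacMat Matrix.mulVec dotProduct mForm sel
  rw [Fintype.sum_prod_type]
  refine Finset.sum_congr rfl fun k _ => ?_
  have hprod : ∀ (l : Fin n) (j : Fin (d - 1) → Fin n),
      (∏ k' : Fin (d - 1), Function.update x k (Pi.single l 1) k' (j k')) =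
        (if j k = l then (1 : ℝ) else 0) * ∏ k' ∈ Finset.univ.erase k, x k' (j k') := by
    intro l j
    rw [← Finset.mul_prod_erase Finset.univ _ (Finset.mem_univ k)]
    congr 1
    · rw [Function.update_self, Pi.single_apply]
    · exact Finset.prod_congr rfl fun k' hk' => by
        rw [Function.update_of_ne (Finset.mem_erase.mp hk').1]
  simp only [hprod, Finset.sum_mul, ite_mul, one_mul, zero_mul]
  rw [Finset.sum_comm]
  simp only [Finset.sum_ite_eq, Finset.mem_univ, if_true]
  refine Finset.sum_congr rfl fun j _ => ?_
  rw [Finset.prod_singleton, Finset.compl_singleton]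
  ring

lemma sum_powerset_split {m : ℕ} (F : Finset (Fin m) → ℝ) :
    ∑ t ∈ (Finset.univ : Finset (Fin m)).powerset, F t =
      F ∅ + (∑ k, F {k}) +
        ∑ t ∈ (Finset.univ : Finset (Fin m)).powerset.filter (fun t => 2 ≤ t.card), F t := by
  rw [← Finset.sum_filter_add_sum_filter_not
    (Finset.univ : Finset (Fin m)).powerset (fun t => 2 ≤ t.card) F, add_comm]
  congr 1
  have hset : (Finset.univ : Finset (Fin m)).powerset.filter (fun t => ¬ 2 ≤ t.card)
      = insert (∅ : Finset (Fin m)) (Finset.univ.image fun k : Fin m => ({k} : Finset (Fin m))) := by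
    ext t
    simp only [Finset.mem_filter, Finset.mem_powerset, Finset.mem_insert, Finset.mem_image,
      Finset.mem_univ, true_and, Finset.subset_univ, not_le, Nat.lt_succ_iff]
    constructor
    · intro ht
      rcases Nat.le_one_iff_eq_zero_or_eq_one.mp ht with h | h
      · exact Or.inl (Finset.card_eq_zero.mp h)
      · rcases Finset.card_eq_one.mp h with ⟨a, rfl⟩
        exact Or.inr ⟨a, rfl⟩
    · rintro (rfl | ⟨a, rfl⟩) <;> simp
  rw [hset, Finset.sum_insert (by simp), Finset.sum_image (fun a _ b _ h =>
    Finset.singleton_injective h)]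

end Aux

set_option maxHeartbeats 2000000 in
/-- Two nearby solutions of the auxiliary inequality in a
dyadic block, at which the Jacobian acts nondegenerately, must in fact be very
close: `‖u^{(i)}‖ ≪ B^{d-2} T_i / (T_1⋯T_{d-1})`. -/
theorem statement7 (d R n : ℕ) (hd : 2 ≤ d) (hR : 1 ≤ R) (hn : 1 ≤ n)
    (f : Fin R → MvPolynomial (Fin n) ℝ)
    (hdeg : ∀ ρ, (f ρ).totalDegree = d)
    (c₀ : ℝ) (hc₀ : 0 < c₀) :
    ∃ C₁ C₃ : ℝ, 1 ≤ C₁ ∧ 0 < C₃ ∧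
      ∀ β : Fin R → ℝ, β ≠ 0 → ∀ B : ℝ, 1 ≤ B →
      ∀ T : Fin (d - 1) → ℝ, (∀ k, 0 < T k ∧ T k ≤ B) →
      ∀ x y : Fin (d - 1) → Fin n → ℝ,
        (∀ k, T k ≤ ‖x k‖ ∧ ‖x k‖ ≤ 2 * T k) →
        (∀ k, T k ≤ ‖y k‖ ∧ ‖y k‖ ≤ 2 * T k) →
        ‖mForm d n (∑ ρ, β ρ • f ρ) x‖ ≤ ‖β‖ * B ^ (d - 2) →
        ‖mForm d n (∑ ρ, β ρ • f ρ) y‖ ≤ ‖β‖ * B ^ (d - 2) →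
        (∀ k, ‖y k - x k‖ ≤ C₁⁻¹ * T k) →
        ‖(jacMat d n (∑ ρ, β ρ • f ρ) x).mulVec (fun kl => (y kl.1 - x kl.1) kl.2)‖ ≥
          c₀ * ‖β‖ * (∏ k, T k) * ⨆ k, ‖y k - x k‖ / T k →
        ∀ k, ‖y k - x k‖ ≤ C₃ * B ^ (d - 2) * T k / ∏ k', T k' := by
  classical
  haveI hne : Nonempty (Fin (d - 1)) := ⟨⟨0, by omega⟩⟩
  set K0 : ℝ := ∑ i : Fin n, ∑ j : Fin (d - 1) → Fin n, ∑ ρ : Fin R,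
      |eval (0 : Fin n → ℝ) (pderiv i (iterPderiv (List.ofFn j) (f ρ)))| with hK0def
  have hK0 : 0 ≤ K0 := by positivity
  set K : ℝ := K0 + 1 with hKdef
  have hK : (0 : ℝ) < K := by positivity
  set D : ℝ := 2 ^ ((Finset.univ : Finset (Fin (d - 1))).card) with hDdef
  have hD : (0 : ℝ) < D := by positivity
  set C₁ : ℝ := 1 + 2 * D ^ 2 * K / c₀ with hC₁def
  have hC₁1 : 1 ≤ C₁ := le_add_of_nonneg_right (by positivity)
  have hC₁pos : (0 : ℝ) < C₁ := by linarith
  refine ⟨C₁, 4 / c₀, hC₁1, by positivity, ?_⟩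
  intro β hβ B hB T hT x y hx hy hmx hmy hu hJ
  set g : MvPolynomial (Fin n) ℝ := ∑ ρ, β ρ • f ρ with hgdef
  set u : Fin (d - 1) → Fin n → ℝ := fun k => y k - x k with hudef
  set ε : ℝ := ⨆ k, ‖y k - x k‖ / T k with hεdef
  have hβpos : 0 < ‖β‖ := norm_pos_iff.mpr hβ
  have hTpos : ∀ k, 0 < T k := fun k => (hT k).1
  have hPT : 0 < ∏ k, T k := Finset.prod_pos fun k _ => hTpos k
  have hBpos : (0 : ℝ) < B := lt_of_lt_of_le one_pos hB
  have hBpow : (0 : ℝ) < B ^ (d - 2) := pow_pos hBpos _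
  have hC₁inv1 : C₁⁻¹ ≤ 1 := by
    rw [inv_le_one_iff₀]; right; exact hC₁1
  -- ε properties
  have hles : ∀ k, ‖y k - x k‖ / T k ≤ ε := by
    intro k
    rw [hεdef]
    exact le_ciSup (f := fun k => ‖y k - x k‖ / T k)
      (Set.Finite.bddAbove (Set.finite_range _)) k
  have hεge : ∀ k, ‖u k‖ ≤ ε * T k := fun k => (div_le_iff₀ (hTpos k)).mp (hles k)
  have hε0 : 0 ≤ ε := by
    obtain ⟨k⟩ := hne
    exact le_trans (div_nonneg (norm_nonneg _) (hTpos k).le) (hles k)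
  have hεC : ε ≤ C₁⁻¹ := by
    rw [hεdef]
    refine ciSup_le fun k => ?_
    rw [div_le_iff₀ (hTpos k)]
    exact hu k
  have hC₁invnn : (0:ℝ) ≤ C₁⁻¹ := inv_nonneg.mpr hC₁pos.le
  have hPTs : ∀ s : Finset (Fin (d - 1)), (0:ℝ) ≤ ∏ k ∈ s, T k :=
    fun s => Finset.prod_nonneg fun k _ => (hTpos k).le
  have h2Ts : ∀ s : Finset (Fin (d - 1)), (0:ℝ) ≤ ∏ k ∈ s, (2 * T k) :=
    fun s => Finset.prod_nonneg fun k _ => by nlinarith [hTpos k]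
  have hεC₁nn : (0:ℝ) ≤ ε * C₁⁻¹ := mul_nonneg hε0 hC₁invnn
  have hbign : (0:ℝ) ≤ ‖β‖ * K * (ε * C₁⁻¹ * (D * ∏ k, T k)) :=
    mul_nonneg (mul_nonneg (norm_nonneg _) hK.le)
      (mul_nonneg hεC₁nn (mul_nonneg hD.le hPT.le))
  -- coefficient bound
  have hcoef : ∀ i : Fin n, (∑ j : Fin (d - 1) → Fin n,
      |eval (0 : Fin n → ℝ) (pderiv i (iterPderiv (List.ofFn j) g))|) ≤ ‖β‖ * K := by
    intro i
    have h1 : ∀ j : Fin (d - 1) → Fin n,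
        eval (0 : Fin n → ℝ) (pderiv i (iterPderiv (List.ofFn j) g)) =
        ∑ ρ, β ρ * eval (0 : Fin n → ℝ) (pderiv i (iterPderiv (List.ofFn j) (f ρ))) := by
      intro j
      rw [hgdef, iterPderiv_sum, map_sum, map_sum]
      exact Finset.sum_congr rfl fun ρ _ => by
        rw [iterPderiv_smul, Derivation.map_smul, smul_eval]
    calc (∑ j : Fin (d - 1) → Fin n,
          |eval (0 : Fin n → ℝ) (pderiv i (iterPderiv (List.ofFn j) g))|)
        ≤ ∑ j : Fin (d - 1) → Fin n, ∑ ρ,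
            ‖β‖ * |eval (0 : Fin n → ℝ) (pderiv i (iterPderiv (List.ofFn j) (f ρ)))| := by
          refine Finset.sum_le_sum fun j _ => ?_
          rw [h1 j]
          refine (Finset.abs_sum_le_sum_abs _ _).trans (Finset.sum_le_sum fun ρ _ => ?_)
          rw [abs_mul]
          exact mul_le_mul_of_nonneg_right
            ((Real.norm_eq_abs (β ρ)) ▸ norm_le_pi_norm β ρ) (abs_nonneg _)
      _ = ‖β‖ * ∑ j : Fin (d - 1) → Fin n, ∑ ρ,
            |eval (0 : Fin n → ℝ) (pderiv i (iterPderiv (List.ofFn j) (f ρ)))| := by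
          rw [Finset.mul_sum]
          exact Finset.sum_congr rfl fun j _ => by rw [Finset.mul_sum]
      _ ≤ ‖β‖ * K := by
          refine mul_le_mul_of_nonneg_left ?_ (norm_nonneg β)
          refine le_trans ?_ (le_add_of_nonneg_right one_pos.le : K0 ≤ K)
          rw [hK0def]
          exact Finset.single_le_sum (f := fun i => ∑ j : Fin (d - 1) → Fin n, ∑ ρ,
            |eval (0 : Fin n → ℝ) (pderiv i (iterPderiv (List.ofFn j) (f ρ)))|)
            (fun i _ => by positivity) (Finset.mem_univ i)
  -- bound on sel for |t| ≥ 2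
  have hselb : ∀ t : Finset (Fin (d - 1)), 2 ≤ t.card → ∀ i : Fin n,
      |sel d n g x u t i| ≤ ‖β‖ * K * (ε * C₁⁻¹ * (D * ∏ k, T k)) := by
    intro t ht i
    have hprodu : (∏ k ∈ t, ‖u k‖) ≤ ε * C₁⁻¹ * ∏ k ∈ t, T k := by
      obtain ⟨a, ha, b, hb, hab⟩ := Finset.one_lt_card.mp ht
      have hb' : b ∈ t.erase a := Finset.mem_erase.mpr ⟨fun h => hab h.symm, hb⟩
      have step : ∀ k, ‖u k‖ ≤ T k := fun k =>
        le_trans (hu k) (by nlinarith [hTpos k, hC₁inv1])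
      calc (∏ k ∈ t, ‖u k‖) = ‖u a‖ * ∏ k ∈ t.erase a, ‖u k‖ :=
            (Finset.mul_prod_erase t _ ha).symm
        _ = ‖u a‖ * (‖u b‖ * ∏ k ∈ (t.erase a).erase b, ‖u k‖) :=
            congrArg (‖u a‖ * ·) (Finset.mul_prod_erase (t.erase a) (fun k => ‖u k‖) hb').symm
        _ ≤ (ε * T a) * ((C₁⁻¹ * T b) * ∏ k ∈ (t.erase a).erase b, T k) := by
            refine mul_le_mul (hεge a) (mul_le_mul (hu b)
              (Finset.prod_le_prod (fun k _ => norm_nonneg _) fun k _ => step k)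
              (Finset.prod_nonneg fun k _ => norm_nonneg _)
              (mul_nonneg hC₁invnn (hTpos b).le))
              (mul_nonneg (norm_nonneg _) (Finset.prod_nonneg fun k _ => norm_nonneg _))
              (mul_nonneg hε0 (hTpos a).le)
        _ = ε * C₁⁻¹ * (T a * (T b * ∏ k ∈ (t.erase a).erase b, T k)) := by ring
        _ = ε * C₁⁻¹ * ∏ k ∈ t, T k := by
            rw [Finset.mul_prod_erase (t.erase a) T hb', Finset.mul_prod_erase t T ha]
    have hprodP : (∏ k ∈ t, ‖u k‖) * ∏ k ∈ tᶜ, ‖x k‖ ≤ ε * C₁⁻¹ * (D * ∏ k, T k) := by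
      have hx2 : (∏ k ∈ tᶜ, ‖x k‖) ≤ ∏ k ∈ tᶜ, (2 * T k) :=
        Finset.prod_le_prod (fun k _ => norm_nonneg _) fun k _ => (hx k).2
      calc (∏ k ∈ t, ‖u k‖) * ∏ k ∈ tᶜ, ‖x k‖
          ≤ (ε * C₁⁻¹ * ∏ k ∈ t, T k) * ∏ k ∈ tᶜ, (2 * T k) :=
            mul_le_mul hprodu hx2 (Finset.prod_nonneg fun k _ => norm_nonneg _)
              (mul_nonneg hεC₁nn (hPTs t))
        _ ≤ (ε * C₁⁻¹ * ∏ k ∈ t, (2 * T k)) * ∏ k ∈ tᶜ, (2 * T k) := by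
            have h2 : (∏ k ∈ t, T k) ≤ ∏ k ∈ t, (2 * T k) :=
              Finset.prod_le_prod (fun k _ => (hTpos k).le) fun k _ => by nlinarith [hTpos k]
            exact mul_le_mul_of_nonneg_right
              (mul_le_mul_of_nonneg_left h2 hεC₁nn) (h2Ts tᶜ)
        _ = ε * C₁⁻¹ * ((∏ k ∈ t, (2 * T k)) * ∏ k ∈ tᶜ, (2 * T k)) := by ring
        _ = ε * C₁⁻¹ * (D * ∏ k, T k) := by
            rw [Finset.prod_mul_prod_compl, Finset.prod_mul_distrib, Finset.prod_const]
    calc |sel d n g x u t i|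
        ≤ ∑ j : Fin (d - 1) → Fin n,
            ((∏ k ∈ t, ‖u k‖) * ∏ k ∈ tᶜ, ‖x k‖) *
              |eval (0 : Fin n → ℝ) (pderiv i (iterPderiv (List.ofFn j) g))| := by
          refine (Finset.abs_sum_le_sum_abs _ _).trans (Finset.sum_le_sum fun j _ => ?_)
          rw [abs_mul, abs_mul]
          refine mul_le_mul_of_nonneg_right ?_ (abs_nonneg _)
          refine mul_le_mul ?_ ?_ (abs_nonneg _) (Finset.prod_nonneg fun k _ => norm_nonneg _)
          · rw [Finset.abs_prod]
            exact Finset.prod_le_prod (fun k _ => abs_nonneg _)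
              (fun k _ => (Real.norm_eq_abs _) ▸ norm_le_pi_norm (u k) (j k))
          · rw [Finset.abs_prod]
            exact Finset.prod_le_prod (fun k _ => abs_nonneg _)
              (fun k _ => (Real.norm_eq_abs _) ▸ norm_le_pi_norm (x k) (j k))
      _ = ((∏ k ∈ t, ‖u k‖) * ∏ k ∈ tᶜ, ‖x k‖) *
            ∑ j : Fin (d - 1) → Fin n,
              |eval (0 : Fin n → ℝ) (pderiv i (iterPderiv (List.ofFn j) g))| := by
          rw [Finset.mul_sum]
      _ ≤ (ε * C₁⁻¹ * (D * ∏ k, T k)) * (‖β‖ * K) :=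
          mul_le_mul hprodP (hcoef i) (Finset.sum_nonneg fun j _ => abs_nonneg _)
            (mul_nonneg hεC₁nn (mul_nonneg hD.le hPT.le))
      _ = ‖β‖ * K * (ε * C₁⁻¹ * (D * ∏ k, T k)) := by ring
  -- the key identity
  have hvec : (fun kl : Fin (d - 1) × Fin n => (y kl.1 - x kl.1) kl.2)
      = fun kl => u kl.1 kl.2 := by
    funext kl; rw [hudef]
  have hiden : ∀ i : Fin n, (jacMat d n g x).mulVec (fun kl => u kl.1 kl.2) i =
      mForm d n g y i - mForm d n g x i -
        ∑ t ∈ (Finset.univ : Finset (Fin (d - 1))).powerset.filter (fun t => 2 ≤ t.card),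
          sel d n g x u t i := by
    intro i
    have hy' : mForm d n g y i =
        ∑ t ∈ (Finset.univ : Finset (Fin (d - 1))).powerset, sel d n g x u t i := by
      have hxy : y = fun k => x k + u k := by funext k; rw [hudef]; ring
      rw [hxy, mForm_expand]
    rw [jac_eq]
    rw [sum_powerset_split (fun t => sel d n g x u t i), sel_empty] at hy'
    linarith
  -- assemble the bound
  have hbound : ∀ i : Fin n, |(jacMat d n g x).mulVec (fun kl => u kl.1 kl.2) i| ≤
      ‖β‖ * B ^ (d - 2) + ‖β‖ * B ^ (d - 2) +
        D * (‖β‖ * K * (ε * C₁⁻¹ * (D * ∏ k, T k))) := by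
    intro i
    rw [hiden i]
    have h1 : |mForm d n g y i| ≤ ‖β‖ * B ^ (d - 2) :=
      le_trans ((Real.norm_eq_abs _) ▸ norm_le_pi_norm (mForm d n g y) i) hmy
    have h2 : |mForm d n g x i| ≤ ‖β‖ * B ^ (d - 2) :=
      le_trans ((Real.norm_eq_abs _) ▸ norm_le_pi_norm (mForm d n g x) i) hmx
    have h3 : |∑ t ∈ (Finset.univ : Finset (Fin (d - 1))).powerset.filter (fun t => 2 ≤ t.card),
        sel d n g x u t i| ≤ D * (‖β‖ * K * (ε * C₁⁻¹ * (D * ∏ k, T k))) := by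
      refine (Finset.abs_sum_le_sum_abs _ _).trans ?_
      have hcard : ((((Finset.univ : Finset (Fin (d - 1))).powerset.filter
          (fun t => 2 ≤ t.card)).card : ℝ)) ≤ D := by
        rw [hDdef]
        have h4 : ((Finset.univ : Finset (Fin (d - 1))).powerset.filter
            (fun t => 2 ≤ t.card)).card ≤ 2 ^ ((Finset.univ : Finset (Fin (d - 1))).card) := by
          calc _ ≤ (Finset.univ : Finset (Fin (d - 1))).powerset.card :=
                Finset.card_le_card (Finset.filter_subset _ _)
            _ = 2 ^ ((Finset.univ : Finset (Fin (d - 1))).card) := Finset.card_powerset _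
        exact_mod_cast h4
      have hb0 : (0:ℝ) ≤ ‖β‖ * K * (ε * C₁⁻¹ * (D * ∏ k, T k)) := hbign
      calc (∑ t ∈ (Finset.univ : Finset (Fin (d - 1))).powerset.filter (fun t => 2 ≤ t.card),
            |sel d n g x u t i|)
          ≤ ((((Finset.univ : Finset (Fin (d - 1))).powerset.filter
              (fun t => 2 ≤ t.card)).card : ℝ)) * (‖β‖ * K * (ε * C₁⁻¹ * (D * ∏ k, T k))) := by
            rw [← nsmul_eq_mul]
            exact Finset.sum_le_card_nsmul _ _ _ fun t ht =>
              hselb t (Finset.mem_filter.mp ht).2 i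
        _ ≤ D * (‖β‖ * K * (ε * C₁⁻¹ * (D * ∏ k, T k))) :=
            mul_le_mul_of_nonneg_right hcard hb0
    have tri : ∀ a b c : ℝ, |a - b - c| ≤ |a| + |b| + |c| := by
      intro a b c
      rw [sub_eq_add_neg, sub_eq_add_neg]
      exact (abs_add_three _ _ _).trans (by rw [abs_neg, abs_neg])
    exact le_trans (tri _ _ _) (add_le_add (add_le_add h1 h2) h3)
  have hnorm : ‖(jacMat d n g x).mulVec (fun kl => u kl.1 kl.2)‖ ≤
      ‖β‖ * B ^ (d - 2) + ‖β‖ * B ^ (d - 2) +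
        D * (‖β‖ * K * (ε * C₁⁻¹ * (D * ∏ k, T k))) := by
    refine (pi_norm_le_iff_of_nonneg ?_).mpr fun i => (Real.norm_eq_abs _) ▸ hbound i
    have := hbound ⟨0, by omega⟩
    exact le_trans (abs_nonneg _) this
  rw [hvec] at hJ
  have hkey : c₀ * ‖β‖ * (∏ k, T k) * ε ≤
      2 * (‖β‖ * B ^ (d - 2)) + D * (‖β‖ * K * (ε * C₁⁻¹ * (D * ∏ k, T k))) := by
    have := le_trans hJ hnorm
    linarith
  -- C₁⁻¹ is small enough
  have hC₁small : D ^ 2 * K * C₁⁻¹ ≤ c₀ / 2 := by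
    rw [mul_inv_le_iff₀ hC₁pos]
    have hexp : c₀ / 2 * C₁ = c₀ / 2 + D ^ 2 * K := by
      rw [hC₁def]; field_simp
    rw [hexp]
    linarith
  have hhalf : D * (‖β‖ * K * (ε * C₁⁻¹ * (D * ∏ k, T k))) ≤
      c₀ / 2 * ‖β‖ * (∏ k, T k) * ε := by
    calc D * (‖β‖ * K * (ε * C₁⁻¹ * (D * ∏ k, T k)))
        = (D ^ 2 * K * C₁⁻¹) * (‖β‖ * (∏ k, T k) * ε) := by ring
      _ ≤ (c₀ / 2) * (‖β‖ * (∏ k, T k) * ε) := by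
          exact mul_le_mul_of_nonneg_right hC₁small
            (mul_nonneg (mul_nonneg (norm_nonneg _) hPT.le) hε0)
      _ = c₀ / 2 * ‖β‖ * (∏ k, T k) * ε := by ring
  have hmain : c₀ / 2 * ‖β‖ * (∏ k, T k) * ε ≤ 2 * (‖β‖ * B ^ (d - 2)) := by linarith
  have hεfin : ε ≤ 4 * B ^ (d - 2) / (c₀ * ∏ k, T k) := by
    rw [le_div_iff₀ (mul_pos hc₀ hPT)]
    have h5 : ‖β‖ * (c₀ / 2 * (∏ k, T k) * ε) ≤ ‖β‖ * (2 * B ^ (d - 2)) := by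
      linarith [hmain]
    have h6 := (mul_le_mul_iff_right₀ hβpos).mp h5
    linarith
  intro k
  calc ‖y k - x k‖ ≤ ε * T k := hεge k
    _ ≤ (4 * B ^ (d - 2) / (c₀ * ∏ k', T k')) * T k :=
        mul_le_mul_of_nonneg_right hεfin (hTpos k).le
    _ = 4 / c₀ * B ^ (d - 2) * T k / ∏ k', T k' := by
        field_simp
end

section
/- Let n ≥ 1 and 1 ≤ m ≤ n. Let y_1,…,y_m ∈ ℂ^n∖{0} be pairwise linearly independent (i.e., for ℓ ≠ ℓ', the vectors y_ℓ and y_{ℓ'} span a 2-dimensional subspace), and let v_1,…,v_m ∈ ℂ^n. Suppose that Σ_{ℓ=1}^{m} (b·v_ℓ)/(b·y_ℓ) = 0 for every b ∈ ℂ^n such that b·y_ℓ ≠ 0 for all ℓ = 1,…,m. Then there exist μ_1,…,μ_m ∈ ℂ with μ_1 + ⋯ + μ_m = 0 and v_ℓ = μ_ℓ·y_ℓ for every ℓ = 1,…,m. -/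
open Finset Polynomial

namespace St10

/-- the pairing `b ↦ ∑ j, b j * w j` as a linear functional. -/
noncomputable def pair (n : ℕ) (w : Fin n → ℂ) : (Fin n → ℂ) →ₗ[ℂ] ℂ where
  toFun b := ∑ j, b j * w j
  map_add' b c := by simp [add_mul, Finset.sum_add_distrib]
  map_smul' t b := by simp [Finset.mul_sum, mul_assoc]

lemma pair_apply (n : ℕ) (w b : Fin n → ℂ) : pair n w b = ∑ j, b j * w j := rfl

lemma pair_single (n : ℕ) (w : Fin n → ℂ) (j : Fin n) :
    pair n w (Pi.single j 1) = w j := by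
  simp [pair_apply, Pi.single_apply, ite_mul]

lemma pair_right_eq {n : ℕ} {w w' : Fin n → ℂ}
    (h : ∀ b, pair n w b = pair n w' b) : w = w' := by
  funext j
  have := h (Pi.single j 1)
  simpa [pair_single] using this

lemma pair_smul_right (n : ℕ) (c : ℂ) (w b : Fin n → ℂ) :
    pair n (c • w) b = c * pair n w b := by
  simp [pair_apply, Finset.mul_sum, mul_left_comm]

lemma pair_ne_zero {n : ℕ} {w : Fin n → ℂ} (hw : w ≠ 0) : pair n w ≠ 0 := by
  intro h
  apply hw
  apply pair_right_eq (w' := 0)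
  intro b
  simp [h, pair_apply]

lemma exists_forall_ne_zero {M : Type*} [AddCommGroup M] [Module ℂ M]
    {ι : Type*} [DecidableEq ι] (s : Finset ι) (φ : ι → M →ₗ[ℂ] ℂ)
    (h : ∀ i ∈ s, φ i ≠ 0) : ∃ b, ∀ i ∈ s, φ i b ≠ 0 := by
  classical
  induction s using Finset.induction_on with
  | empty => exact ⟨0, by simp⟩
  | @insert a s ha ih =>
    obtain ⟨b, hb⟩ := ih (fun i hi => h i (Finset.mem_insert_of_mem hi))
    have hφa : φ a ≠ 0 := h a (Finset.mem_insert_self a s)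
    obtain ⟨c, hc⟩ : ∃ c, φ a c ≠ 0 := by
      by_contra hcon
      push_neg at hcon
      exact hφa (LinearMap.ext fun x => hcon x)
    obtain ⟨t, ht⟩ := Infinite.exists_notMem_finset
      ((insert a s).image fun i => -(φ i b) / (φ i c))
    refine ⟨b + t • c, ?_⟩
    intro i hi hzero
    rw [map_add, map_smul, smul_eq_mul] at hzero
    have hic : φ i c ≠ 0 := by
      intro h0
      rcases Finset.mem_insert.mp hi with rfl | his
      · exact hc h0
      · exact hb i his (by simpa [h0] using hzero)
    apply ht
    refine Finset.mem_image.mpr ⟨i, hi, ?_⟩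
    field_simp
    linear_combination -hzero

lemma eq_smul_of_ker_le {n : ℕ} {w w' : Fin n → ℂ} (hw : w ≠ 0)
    (hker : ∀ b, pair n w b = 0 → pair n w' b = 0) : ∃ c : ℂ, w' = c • w := by
  obtain ⟨b1, hb1⟩ : ∃ b1, pair n w b1 ≠ 0 := by
    by_contra hcon
    push_neg at hcon
    exact pair_ne_zero hw (LinearMap.ext fun b => by simpa using hcon b)
  set b0 := (pair n w b1)⁻¹ • b1 with hb0
  have h0 : pair n w b0 = 1 := by
    rw [hb0, map_smul, smul_eq_mul, inv_mul_cancel₀ hb1]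
  refine ⟨pair n w' b0, pair_right_eq fun b => ?_⟩
  have hk : pair n w (b - (pair n w b) • b0) = 0 := by
    rw [map_sub, map_smul, smul_eq_mul, h0, mul_one, sub_self]
  have h2 := hker _ hk
  rw [map_sub, map_smul, smul_eq_mul] at h2
  rw [pair_smul_right]
  linear_combination h2

end St10

open St10

/-- If `y_1,…,y_m ∈ ℂ^n` are nonzero and pairwise linearly
independent and `Σ_ℓ (b·v_ℓ)/(b·y_ℓ) = 0` for all `b` avoiding the hyperplanes
`b·y_ℓ = 0`, then each `v_ℓ` is a multiple `μ_ℓ y_ℓ` with `Σ μ_ℓ = 0`. -/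
theorem statement10 (n m : ℕ) (hn : 1 ≤ n) (hm1 : 1 ≤ m) (hmn : m ≤ n)
    (y : Fin m → Fin n → ℂ) (hy0 : ∀ ℓ, y ℓ ≠ 0)
    (hind : ∀ ℓ ℓ' : Fin m, ℓ ≠ ℓ' → LinearIndependent ℂ ![y ℓ, y ℓ'])
    (v : Fin m → Fin n → ℂ)
    (hvan : ∀ b : Fin n → ℂ, (∀ ℓ, (∑ j, b j * y ℓ j) ≠ 0) →
      (∑ ℓ, (∑ j, b j * v ℓ j) / (∑ j, b j * y ℓ j)) = 0) :
    ∃ μ : Fin m → ℂ, (∑ ℓ, μ ℓ) = 0 ∧ ∀ ℓ, v ℓ = μ ℓ • y ℓ := by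
  classical
  -- restate vanishing hypothesis with `pair`
  have hvan' : ∀ b : Fin n → ℂ, (∀ ℓ, pair n (y ℓ) b ≠ 0) →
      (∑ ℓ, pair n (v ℓ) b / pair n (y ℓ) b) = 0 := by
    intro b hb
    simpa [pair_apply] using hvan b (fun ℓ => by simpa [pair_apply] using hb ℓ)
  have hyφ : ∀ ℓ, pair n (y ℓ) ≠ 0 := fun ℓ => pair_ne_zero (hy0 ℓ)
  -- a vector pairing nontrivially with every `y ℓ`
  obtain ⟨c, hc⟩ := exists_forall_ne_zero (Finset.univ : Finset (Fin m))
    (fun ℓ => pair n (y ℓ)) (fun ℓ _ => hyφ ℓ)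
  have hc' : ∀ ℓ, pair n (y ℓ) c ≠ 0 := fun ℓ => hc ℓ (mem_univ ℓ)
  -- clearing denominators
  have hmul : ∀ (d a : Fin m → ℂ), (∀ ℓ, d ℓ ≠ 0) → (∑ ℓ, a ℓ / d ℓ) = 0 →
      (∑ ℓ, a ℓ * ∏ k ∈ univ.erase ℓ, d k) = 0 := by
    intro d a hd hsum
    have key : (∑ ℓ, a ℓ * ∏ k ∈ univ.erase ℓ, d k)
        = (∏ k, d k) * ∑ ℓ, a ℓ / d ℓ := by
      rw [Finset.mul_sum]
      refine Finset.sum_congr rfl fun ℓ _ => ?_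
      rw [← Finset.prod_erase_mul univ d (mem_univ ℓ)]
      field_simp [hd ℓ]
    rw [key, hsum, mul_zero]
  -- the polynomial identity, valid for every b
  have claim2 : ∀ b : Fin n → ℂ,
      (∑ ℓ, pair n (v ℓ) b * ∏ k ∈ univ.erase ℓ, pair n (y k) b) = 0 := by
    intro b
    set q : Polynomial ℂ :=
      ∑ ℓ, (C (pair n (v ℓ) b) + X * C (pair n (v ℓ) c)) *
        ∏ k ∈ univ.erase ℓ, (C (pair n (y k) b) + X * C (pair n (y k) c)) with hq
    have heval : ∀ t : ℂ, q.eval t =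
        ∑ ℓ, pair n (v ℓ) (b + t • c) * ∏ k ∈ univ.erase ℓ, pair n (y k) (b + t • c) := by
      intro t
      have h1 : ∀ w : Fin n → ℂ, (C (pair n w b) + X * C (pair n w c)).eval t
          = pair n w (b + t • c) := by
        intro w
        simp only [map_add, map_smul, smul_eq_mul, eval_add, eval_mul, eval_C, eval_X]
        try ring
      rw [hq, eval_finset_sum]
      refine Finset.sum_congr rfl fun ℓ _ => ?_
      rw [eval_mul, eval_prod, h1]
      exact congrArg _ (Finset.prod_congr rfl fun k _ => h1 (y k))
    have hq0 : q = 0 := by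
      apply Polynomial.eq_zero_of_infinite_isRoot
      have hsub : (((univ : Finset (Fin m)).image
          fun ℓ => -(pair n (y ℓ) b) / (pair n (y ℓ) c) : Finset ℂ) : Set ℂ)ᶜ
          ⊆ {x | q.IsRoot x} := by
        intro t ht
        have hnz : ∀ ℓ, pair n (y ℓ) (b + t • c) ≠ 0 := by
          intro ℓ h0
          rw [map_add, map_smul, smul_eq_mul] at h0
          apply ht
          refine Finset.mem_coe.mpr (Finset.mem_image.mpr ⟨ℓ, mem_univ ℓ, ?_⟩)
          rw [div_eq_iff (hc' ℓ)]
          linear_combination -h0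
        have := hmul (fun ℓ => pair n (y ℓ) (b + t • c))
          (fun ℓ => pair n (v ℓ) (b + t • c)) hnz (hvan' _ hnz)
        simpa [Polynomial.IsRoot, heval t] using this
      exact Set.Infinite.mono hsub
        ((Finset.finite_toSet _).infinite_compl)
    have := heval 0
    rw [hq0] at this
    simpa using this.symm
  -- each v ℓ₀ is a multiple of y ℓ₀
  have hmult : ∀ ℓ₀ : Fin m, ∃ μ : ℂ, v ℓ₀ = μ • y ℓ₀ := by
    intro ℓ₀
    have hyper : ∀ b : Fin n → ℂ, pair n (y ℓ₀) b = 0 →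
        pair n (v ℓ₀) b * ∏ k ∈ univ.erase ℓ₀, pair n (y k) b = 0 := by
      intro b hb0
      have := claim2 b
      rwa [Finset.sum_eq_single ℓ₀ (fun ℓ _ hℓ => by
        rw [Finset.prod_eq_zero (Finset.mem_erase.mpr ⟨Ne.symm hℓ, mem_univ ℓ₀⟩) hb0,
          mul_zero]) (fun h => absurd (mem_univ ℓ₀) h)] at this
    have hker : ∀ b : Fin n → ℂ, pair n (y ℓ₀) b = 0 → pair n (v ℓ₀) b = 0 := by
      by_contra hcon
      push_neg at hcon
      obtain ⟨b', hb'0, hb'⟩ := hcon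
      set K : Submodule ℂ (Fin n → ℂ) := LinearMap.ker (pair n (y ℓ₀)) with hK
      set θ : Fin m → (K →ₗ[ℂ] ℂ) := fun ℓ =>
        if ℓ = ℓ₀ then (pair n (v ℓ₀)).comp K.subtype
        else (pair n (y ℓ)).comp K.subtype with hθ
      have hθne : ∀ ℓ ∈ (univ : Finset (Fin m)), θ ℓ ≠ 0 := by
        intro ℓ _ h0
        by_cases hℓ : ℓ = ℓ₀
        · subst hℓ
          have : pair n (v ℓ) b' = 0 := by
            have := congrArg (fun f => f ⟨b', LinearMap.mem_ker.mpr hb'0⟩) h0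
            simpa [hθ] using this
          exact hb' this
        · have hker' : ∀ b : Fin n → ℂ, pair n (y ℓ₀) b = 0 → pair n (y ℓ) b = 0 := by
            intro b hb
            have := congrArg (fun f => f ⟨b, LinearMap.mem_ker.mpr hb⟩) h0
            simpa [hθ, hℓ] using this
          obtain ⟨d, hd⟩ := eq_smul_of_ker_le (hy0 ℓ₀) hker'
          have hli := hind ℓ ℓ₀ hℓ
          rw [LinearIndependent.pair_iff] at hli
          have := (hli (-1) d (by rw [hd]; module)).1
          simp at this
      obtain ⟨x, hx⟩ := exists_forall_ne_zero (univ : Finset (Fin m)) θ hθne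
      have hx0 : pair n (y ℓ₀) (x : Fin n → ℂ) = 0 := LinearMap.mem_ker.mp x.2
      have hprod := hyper (x : Fin n → ℂ) hx0
      rcases mul_eq_zero.mp hprod with h | h
      · have := hx ℓ₀ (mem_univ ℓ₀)
        rw [hθ] at this
        simp only [if_pos rfl] at this
        exact this (by simpa using h)
      · obtain ⟨k, hk, hk0⟩ := Finset.prod_eq_zero_iff.mp h
        have hkne : k ≠ ℓ₀ := (Finset.mem_erase.mp hk).1
        have := hx k (mem_univ k)
        rw [hθ] at this
        simp only [if_neg hkne] at this
        exact this (by simpa using hk0)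
    exact eq_smul_of_ker_le (hy0 ℓ₀) hker
  choose μ hμ using hmult
  refine ⟨μ, ?_, hμ⟩
  obtain ⟨b, hb⟩ := exists_forall_ne_zero (Finset.univ : Finset (Fin m))
    (fun ℓ => pair n (y ℓ)) (fun ℓ _ => hyφ ℓ)
  have hb' : ∀ ℓ, pair n (y ℓ) b ≠ 0 := fun ℓ => hb ℓ (mem_univ ℓ)
  have := hvan' b hb'
  rw [Finset.sum_congr rfl (fun ℓ _ => by
    rw [hμ ℓ, pair_smul_right, mul_div_assoc, div_self (hb' ℓ), mul_one])] at this
  exact this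
end

section
/- Let d ≥ 2 and n ≥ 1. Let x^{(1)},…,x^{(d)} ∈ ℂ^n∖{0} and w^{(1)},…,w^{(d)} ∈ ℂ^n. Suppose that for every homogeneous form H of degree d in n variables with complex coefficients, (x^{(d)})^T · J^{H}(x^{(1)},…,x^{(d−1)})·(w^{(1)},…,w^{(d−1)}) + m^{(H)}(x^{(1)},…,x^{(d−1)})·w^{(d)} = 0, where (w^{(1)},…,w^{(d−1)}) is regarded as a column vector in ℂ^{(d−1)n} and the second term is the bilinear pairing Σ_i m_i^{(H)}(x^{(1)},…,x^{(d−1)})·w^{(d)}_i. Then for every b ∈ ℂ^n with b·x^{(i)} ≠ 0 for all i = 1,…,d, one has Σ_{i=1}^{d} (b·w^{(i)})/(b·x^{(i)}) = 0. -/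
open MvPolynomial

lemma pderiv_linear {n : ℕ} (b : Fin n → ℂ) (a : Fin n) :
    pderiv a (∑ j, (C (b j) * X j : MvPolynomial (Fin n) ℂ)) = C (b a) := by
  rw [map_sum]
  rw [Finset.sum_eq_single a]
  · simp
  · intro j _ hj; simp [pderiv_X, Pi.single_apply, hj]
  · simp

lemma iter_key {n : ℕ} (b : Fin n → ℂ) (js : List (Fin n)) (e : ℕ) :
    iterPderiv js ((∑ j, (C (b j) * X j : MvPolynomial (Fin n) ℂ)) ^ e) =
      C (((e.descFactorial js.length : ℕ) : ℂ) * (js.map b).prod) *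
        (∑ j, C (b j) * X j) ^ (e - js.length) := by
  induction js with
  | nil => simp [iterPderiv]
  | cons a t ih =>
    have h1 : iterPderiv (a :: t) ((∑ j, (C (b j) * X j : MvPolynomial (Fin n) ℂ)) ^ e)
        = pderiv a (iterPderiv t ((∑ j, (C (b j) * X j : MvPolynomial (Fin n) ℂ)) ^ e)) := rfl
    rw [h1, ih]
    set L := (∑ j, (C (b j) * X j : MvPolynomial (Fin n) ℂ)) with hL
    rw [Derivation.leibniz, Derivation.leibniz_pow, pderiv_C,
      show pderiv a L = C (b a) from by rw [hL]; exact pderiv_linear b a]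
    simp only [smul_eq_mul, nsmul_eq_mul, smul_smul, mul_zero, zero_mul, add_zero,
      List.map_cons, List.prod_cons, List.length_cons]
    rw [← map_natCast (C : ℂ →+* MvPolynomial (Fin n) ℂ) (e - t.length),
      Nat.descFactorial_succ]
    push_cast
    rw [show e - t.length - 1 = e - (t.length + 1) by omega]
    simp only [map_mul]
    ring

lemma mForm_eq_aux {d n : ℕ} (hd : 1 ≤ d) (b : Fin n → ℂ) (y : Fin (d - 1) → Fin n → ℂ)
    (i : Fin n) :
    (∑ j : Fin (d - 1) → Fin n,
      (∏ k, y k (j k)) *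
        eval (0 : Fin n → ℂ) (pderiv i (iterPderiv (List.ofFn j)
          ((∑ j, (C (b j) * X j : MvPolynomial (Fin n) ℂ)) ^ d)))) =
      (d.factorial : ℂ) * b i * ∏ k, ∑ l, b l * y k l := by
  have key : ∀ j : Fin (d - 1) → Fin n,
      eval (0 : Fin n → ℂ) (pderiv i (iterPderiv (List.ofFn j)
        ((∑ j, (C (b j) * X j : MvPolynomial (Fin n) ℂ)) ^ d)))
      = (d.factorial : ℂ) * (b i * ∏ k, b (j k)) := by
    intro j
    have h1 : pderiv i (iterPderiv (List.ofFn j)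
        ((∑ j, (C (b j) * X j : MvPolynomial (Fin n) ℂ)) ^ d))
        = iterPderiv (i :: List.ofFn j) ((∑ j, C (b j) * X j) ^ d) := rfl
    rw [h1, iter_key]
    have hlen : (i :: List.ofFn j).length = d := by
      simp [List.length_ofFn]; omega
    rw [hlen, Nat.sub_self, pow_zero, mul_one, eval_C, Nat.descFactorial_self]
    simp [List.map_ofFn, List.prod_ofFn, Function.comp]
  have h2 : (∏ k, ∑ l, b l * y k l)
      = ∑ j : Fin (d - 1) → Fin n, ∏ k, (b (j k) * y k (j k)) := by
    rw [Finset.prod_univ_sum, Fintype.piFinset_univ]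
  rw [h2, Finset.mul_sum]
  refine Finset.sum_congr rfl fun j _ => ?_
  rw [key j, Finset.prod_mul_distrib]
  ring

/-- If `(x^{(d)})^T J^H(x^{(1)},…,x^{(d-1)})·(w^{(1)},…,w^{(d-1)})
+ m^{(H)}(x^{(1)},…,x^{(d-1)})·w^{(d)}` vanishes for every complex form `H` of
degree `d`, then `Σ_{i=1}^d (b·w^{(i)})/(b·x^{(i)}) = 0` whenever all the
denominators are nonzero. -/

theorem statement11 (d n : ℕ) (hd : 2 ≤ d) (hn : 1 ≤ n)
    (x : Fin (d - 1) → Fin n → ℂ) (xd : Fin n → ℂ)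
    (w : Fin (d - 1) → Fin n → ℂ) (wd : Fin n → ℂ)
    (hx0 : ∀ k, x k ≠ 0) (hxd0 : xd ≠ 0)
    (hvan : ∀ H : MvPolynomial (Fin n) ℂ, H.IsHomogeneous d →
      (∑ i, xd i * (jacMat d n H x).mulVec (fun kl => w kl.1 kl.2) i) +
        (∑ i, mForm d n H x i * wd i) = 0) :
    ∀ b : Fin n → ℂ, (∀ k, (∑ j, b j * x k j) ≠ 0) → (∑ j, b j * xd j) ≠ 0 →
      (∑ k, (∑ j, b j * w k j) / (∑ j, b j * x k j)) +
        (∑ j, b j * wd j) / (∑ j, b j * xd j) = 0 := by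
  intro b hb hbd
  have hd1 : 1 ≤ d := le_trans one_le_two hd
  have hL : (∑ j, (C (b j) * X j : MvPolynomial (Fin n) ℂ)).IsHomogeneous 1 :=
    MvPolynomial.IsHomogeneous.sum _ _ _ fun j _ => (isHomogeneous_X ℂ j).C_mul (b j)
  have hH : ((∑ j, (C (b j) * X j : MvPolynomial (Fin n) ℂ)) ^ d).IsHomogeneous d := by
    simpa using hL.pow d
  have key := hvan _ hH
  have hmf : ∀ (y : Fin (d - 1) → Fin n → ℂ) (i : Fin n),
      mForm d n ((∑ j, (C (b j) * X j : MvPolynomial (Fin n) ℂ)) ^ d) y i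
      = (d.factorial : ℂ) * b i * ∏ k, ∑ l, b l * y k l := fun y i => mForm_eq_aux hd1 b y i
  set E : Fin (d - 1) → ℂ := fun k => ∏ k' ∈ Finset.univ.erase k, ∑ j, b j * x k' j with hE
  set T : ℂ := ∑ k, (∑ j, b j * w k j) * E k with hT
  set P : ℂ := ∏ k, ∑ j, b j * x k j with hP'
  have hP : P ≠ 0 := Finset.prod_ne_zero_iff.mpr fun k _ => hb k
  have hupd : ∀ (k : Fin (d - 1)) (l : Fin n),
      (∏ k', ∑ l', b l' * Function.update x k (Pi.single l 1) k' l') = b l * E k := by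
    intro k l
    rw [← Finset.mul_prod_erase Finset.univ _ (Finset.mem_univ k)]
    congr 1
    · rw [Function.update_self]
      simp [Pi.single_apply]
    · refine Finset.prod_congr rfl fun k' hk' => ?_
      rw [Function.update_of_ne (Finset.ne_of_mem_erase hk')]
  have h2 : (∑ i, mForm d n ((∑ j, (C (b j) * X j : MvPolynomial (Fin n) ℂ)) ^ d) x i * wd i)
      = (d.factorial : ℂ) * P * (∑ j, b j * wd j) := by
    simp only [hmf, ← hP']
    rw [Finset.mul_sum]
    exact Finset.sum_congr rfl fun i _ => by ring
  have h1 : (∑ i, xd i * (jacMat d n ((∑ j, (C (b j) * X j : MvPolynomial (Fin n) ℂ)) ^ d)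
        x).mulVec (fun kl => w kl.1 kl.2) i)
      = (d.factorial : ℂ) * (∑ j, b j * xd j) * T := by
    simp only [Matrix.mulVec, dotProduct, jacMat, hmf, hupd]
    have inner : ∀ i : Fin n,
        (∑ kl : Fin (d - 1) × Fin n,
          ((d.factorial : ℂ) * b i * (b kl.2 * E kl.1)) * w kl.1 kl.2)
        = (d.factorial : ℂ) * b i * T := by
      intro i
      rw [Fintype.sum_prod_type, hT, Finset.mul_sum]
      refine Finset.sum_congr rfl fun k _ => ?_
      rw [Finset.sum_mul, Finset.mul_sum]
      exact Finset.sum_congr rfl fun l _ => by ring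
    calc (∑ i, xd i * ∑ kl : Fin (d - 1) × Fin n,
            ((d.factorial : ℂ) * b i * (b kl.2 * E kl.1)) * w kl.1 kl.2)
        = ∑ i, xd i * ((d.factorial : ℂ) * b i * T) := by
          exact Finset.sum_congr rfl fun i _ => by rw [inner i]
      _ = ∑ i, (d.factorial : ℂ) * (b i * xd i) * T :=
          Finset.sum_congr rfl fun i _ => by ring
      _ = ((d.factorial : ℂ) * ∑ i, b i * xd i) * T := by
          rw [← Finset.sum_mul, ← Finset.mul_sum]
      _ = (d.factorial : ℂ) * (∑ j, b j * xd j) * T := by ring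
  rw [h1, h2] at key
  have hfac : (d.factorial : ℂ) ≠ 0 := Nat.cast_ne_zero.mpr d.factorial_ne_zero
  have hkey : (∑ j, b j * xd j) * T + P * (∑ j, b j * wd j) = 0 := by
    have : (d.factorial : ℂ) * ((∑ j, b j * xd j) * T + P * (∑ j, b j * wd j)) = 0 := by
      linear_combination key
    exact (mul_eq_zero.mp this).resolve_left hfac
  have hstep : ∀ k : Fin (d - 1),
      (∑ j, b j * w k j) / (∑ j, b j * x k j) = (∑ j, b j * w k j) * E k / P := by
    intro k
    rw [div_eq_div_iff (hb k) hP, hP',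
      ← Finset.mul_prod_erase Finset.univ _ (Finset.mem_univ k)]
    ring
  rw [show (∑ k, (∑ j, b j * w k j) / (∑ j, b j * x k j))
      = ∑ k, (∑ j, b j * w k j) * E k / P from Finset.sum_congr rfl fun k _ => hstep k,
    ← Finset.sum_div, ← hT, div_add_div _ _ hP hbd, div_eq_zero_iff]
  left
  linear_combination hkey
end
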